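/- Let K be a field of characteristic p > 0 with c = [K : K^p] finite, let q = p^k, and let d ≥ 1. If L/K is an algebraic extension and M/L is a field extension of degree at most d, then the extension M^{1/q}/L has degree at most d·c^k, where M^{1/q} is the field of q-th roots of elements of M inside a fixed algebraic closure. -/

import Mathlib

set_option synthInstance.maxHeartbeats 1000000
set_option maxHeartbeats 2000000

open Cardinal Module

lemma aux_indep_le {X : Type*} [Field X] {A B : Subfield X} (h : A ≤ B)
    {ι : Type*} {v : ι → X} (hv : LinearIndependent B v) : LinearIndependent A v := by
  rw [linearIndependent_iff'] at hv ⊢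
  intro t g hg i hi
  have := hv t (fun i => ⟨g i, h (g i).2⟩) ?_ i hi
  · exact Subtype.ext (by simpa using congrArg Subtype.val this)
  · rw [← hg]; rfl

lemma aux_rank_frob_le (p : ℕ) [Fact p.Prime] (K : Type*) (L : Type*) [Field K] [Field L]
    [CharP K p] [CharP L p] [Algebra K L] [Algebra.IsAlgebraic K L] (c : ℕ)
    (hc : Module.rank (frobenius K p).fieldRange K = c) :
    Module.rank (frobenius L p).fieldRange L ≤ (c : Cardinal) := by
  set ι := algebraMap K L with hι
  set φ := frobenius L p with hφ
  set K₁ : Subfield L := ι.fieldRange with hK₁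
  set Kp : Subfield L := K₁.map φ with hKp
  have hcomap : Kp.comap ι = (frobenius K p).fieldRange := by
    ext x
    simp only [Subfield.mem_comap, hKp, Subfield.mem_map, RingHom.mem_fieldRange, hK₁]
    constructor
    · rintro ⟨y, ⟨z, rfl⟩, hzx⟩
      refine ⟨z, ι.injective ?_⟩
      rw [← hzx, hφ, frobenius_def, frobenius_def, map_pow]
    · rintro ⟨z, rfl⟩
      exact ⟨ι z, ⟨z, rfl⟩, by rw [hφ, frobenius_def, frobenius_def, map_pow]⟩
  have hc' : Kp.relrank K₁ = (c : Cardinal) := by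
    have h1 := Subfield.lift_rank_comap Kp ι
    rw [hcomap, hc, lift_natCast] at h1
    exact Cardinal.lift_eq_nat_iff.mp h1.symm
  -- algebra structure of K₁ over K
  letI : Algebra K ↥K₁ := (ι.rangeRestrictField).toAlgebra
  haveI : IsScalarTower K ↥K₁ L := IsScalarTower.of_algebraMap_eq (fun x => rfl)
  haveI : Algebra.IsIntegral K L := Algebra.IsAlgebraic.isIntegral
  refine rank_le fun s hs => ?_
  have hint : ∀ x ∈ (↑s : Set L), IsIntegral (↥K₁) x :=
    fun x _ => (Algebra.IsIntegral.isIntegral (R := K) x).tower_top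
  set E' := IntermediateField.adjoin ↥K₁ (↑s : Set L) with hE'
  haveI : FiniteDimensional ↥K₁ ↥E' := IntermediateField.finiteDimensional_adjoin hint
  set E : Subfield L := E'.toSubfield with hE
  have hK₁E : K₁ ≤ E := by
    intro x hx
    have := E'.algebraMap_mem (⟨x, hx⟩ : K₁)
    exact this
  have hsE : ∀ x : L, x ∈ s → x ∈ E := fun x hx => IntermediateField.subset_adjoin _ _ hx
  have hEext : Subfield.extendScalars hK₁E = E' := by
    ext x; exact Iff.rfl
  have hnlt : K₁.relrank E < ℵ₀ := by
    rw [Subfield.relrank_eq_rank_of_le hK₁E, hEext]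
    exact rank_lt_aleph0 ↥K₁ ↥E'
  have hn0 : K₁.relrank E ≠ 0 := by
    rw [Subfield.relrank_eq_rank_of_le hK₁E, hEext]
    exact rank_pos.ne'
  set Ep : Subfield L := E.map φ with hEp
  have hEpE : Ep ≤ E := by
    intro x hx
    obtain ⟨y, hy, rfl⟩ := Subfield.mem_map.mp hx
    rw [hφ, frobenius_def]
    exact pow_mem hy p
  have hKpK₁ : Kp ≤ K₁ := by
    intro x hx
    obtain ⟨y, hy, rfl⟩ := Subfield.mem_map.mp hx
    rw [hφ, frobenius_def]
    exact pow_mem hy p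
  have hKpEp : Kp ≤ Ep := by
    intro x hx
    obtain ⟨y, hy, rfl⟩ := Subfield.mem_map.mp hx
    exact Subfield.mem_map.mpr ⟨y, hK₁E hy, rfl⟩
  have hEpLp : Ep ≤ φ.fieldRange := by
    intro x hx
    obtain ⟨y, _, rfl⟩ := Subfield.mem_map.mp hx
    exact ⟨y, rfl⟩
  have heq : (c : Cardinal) * (K₁.relrank E) = (K₁.relrank E) * (Ep.relrank E) := by
    rw [← hc', Subfield.relrank_mul_relrank hKpK₁ hK₁E,
      ← Subfield.relrank_map_map K₁ E φ, Subfield.relrank_mul_relrank hKpEp hEpE]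
  have hxlt : Ep.relrank E < ℵ₀ := by
    calc Ep.relrank E ≤ (K₁.relrank E) * (Ep.relrank E) := Cardinal.le_mul_left hn0
    _ = (c : Cardinal) * (K₁.relrank E) := heq.symm
    _ < ℵ₀ := Cardinal.mul_lt_aleph0 (nat_lt_aleph0 c) hnlt
  obtain ⟨m, hm⟩ := Cardinal.lt_aleph0.mp hxlt
  obtain ⟨n', hn'⟩ := Cardinal.lt_aleph0.mp hnlt
  rw [hm, hn'] at heq
  norm_cast at heq
  have hn'0 : n' ≠ 0 := by
    rintro rfl; rw [hn'] at hn0; simp at hn0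
  have hmc : m = c :=
    Nat.eq_of_mul_eq_mul_left (Nat.pos_of_ne_zero hn'0) (by rw [← heq]; ring)
  -- independence
  have hs' : LinearIndependent ↥Ep (fun i : s => (i : L)) := aux_indep_le hEpLp hs
  set E'' := Subfield.extendScalars hEpE with hE''
  set v : s → ↥E'' := fun i => ⟨(i : L), hsE _ i.2⟩ with hv
  have hcomp : ⇑E''.val.toLinearMap ∘ v = fun i : s => (i : L) := rfl
  have hvind : LinearIndependent ↥Ep v :=
    LinearIndependent.of_comp E''.val.toLinearMap (by rw [hcomp]; exact hs')
  have hcard : (s.card : Cardinal) ≤ Ep.relrank E := by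
    rw [Subfield.relrank_eq_rank_of_le hEpE]
    simpa [Cardinal.mk_coe_finset] using hvind.cardinal_le_rank
  rw [hm, hmc] at hcard
  exact_mod_cast hcard

/-- Let `K` be semi-perfect of characteristic `p` with `[K : K^p] = c`, let `L/K` be
algebraic, and `M/L` of degree at most `d`. Then any extension `N` of `M` all of whose
elements have their `q`-th power in `M` (in particular `N = M^{1/q}`) has degree at most
`d·c^k` over `L`, where `q = p^k`. -/
theorem stmt16 (p k d : ℕ) [Fact p.Prime]
    (K L M N : Type*) [Field K] [Field L] [Field M] [Field N] [CharP K p]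
    [Algebra K L] [Algebra L M] [Algebra M N] [Algebra L N] [IsScalarTower L M N]
    [Algebra.IsAlgebraic K L]
    (c : ℕ) (hc : Module.rank (frobenius K p).fieldRange K = c)
    (hd : Module.rank L M ≤ d)
    (hN : ∀ x : N, ∃ m : M, algebraMap M N m = x ^ p ^ k) :
    Module.rank L N ≤ ((d * c ^ k : ℕ) : Cardinal) := by
  have hP : Fact p.Prime := inferInstance
  haveI : CharP L p := charP_of_injective_algebraMap (algebraMap K L).injective p
  haveI : CharP M p := charP_of_injective_algebraMap (algebraMap L M).injective p
  haveI : CharP N p := charP_of_injective_algebraMap (algebraMap M N).injective p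
  haveI : ExpChar L p := .prime hP.out
  haveI : ExpChar M p := .prime hP.out
  haveI : ExpChar N p := .prime hP.out
  have hq0 : p ^ k ≠ 0 := pow_ne_zero _ hP.out.ne_zero
  have hMN : Function.Injective (algebraMap M N) := (algebraMap M N).injective
  -- the ring hom F : N →+* M, x ↦ (x ^ p ^ k)^{as element of M}
  set F : N →+* M :=
    { toFun := fun x => (hN x).choose
      map_one' := hMN (by rw [(hN 1).choose_spec, one_pow, map_one])
      map_mul' := fun x y => hMN (by
        rw [(hN _).choose_spec, map_mul, (hN x).choose_spec, (hN y).choose_spec, mul_pow])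
      map_zero' := hMN (by rw [(hN 0).choose_spec, map_zero, zero_pow hq0])
      map_add' := fun x y => hMN (by
        rw [(hN _).choose_spec, map_add, (hN x).choose_spec, (hN y).choose_spec,
          add_pow_char_pow]) } with hFdef
  have hF : ∀ x : N, algebraMap M N (F x) = x ^ p ^ k := fun x => (hN x).choose_spec
  have hFl : ∀ l : L, F (algebraMap L N l) = algebraMap L M (l ^ p ^ k) := by
    intro l
    apply hMN
    rw [hF, ← IsScalarTower.algebraMap_apply L M N, map_pow]
  set ψ := algebraMap L M with hψ
  set L₀ : Subfield M := ψ.fieldRange with hL₀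
  set g : L →+* M := ψ.comp (iterateFrobenius L p k) with hg
  have hgl : ∀ l : L, g l = ψ (l ^ p ^ k) := fun l => by
    rw [hg, RingHom.comp_apply, iterateFrobenius_def]
  set gE : L ≃+* ↥g.fieldRange := RingEquiv.ofBijective g.rangeRestrictField
    ⟨fun a b hab => g.injective (congrArg Subtype.val hab), by
      rintro ⟨y, hy⟩
      obtain ⟨z, rfl⟩ := RingHom.mem_fieldRange.mp hy
      exact ⟨z, Subtype.ext rfl⟩⟩ with hgE
  have hgEcoe : ∀ l : L, ((gE l : ↥g.fieldRange) : M) = g l := fun l => rfl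
  -- step 2 : [N : L] ≤ [M : g(L)]
  have step2 := Algebra.lift_rank_le_of_injective_injective
    (R := L) (S := N) (R' := ↥g.fieldRange) (S' := M)
    gE.symm.toRingHom F gE.symm.injective F.injective (by
      ext y
      show F (algebraMap L N (gE.symm y)) = (y : M)
      rw [hFl, ← iterateFrobenius_def, ← RingHom.comp_apply, ← hg, ← hgEcoe,
        RingEquiv.apply_symm_apply])
  -- subfield chain in M
  set θ := frobenius M p with hθ
  set A : ℕ → Subfield M := fun j => L₀.map (iterateFrobenius M p j) with hA
  have hmemA : ∀ (j : ℕ) (x : M), x ∈ A j ↔ ∃ l : L, ψ l ^ p ^ j = x := by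
    intro j x
    simp only [hA, Subfield.mem_map, RingHom.mem_fieldRange, hL₀, iterateFrobenius_def]
    constructor
    · rintro ⟨y, ⟨l, rfl⟩, rfl⟩; exact ⟨l, rfl⟩
    · rintro ⟨l, rfl⟩; exact ⟨ψ l, ⟨l, rfl⟩, rfl⟩
  have hgr : g.fieldRange = A k := by
    ext x
    rw [hmemA, RingHom.mem_fieldRange]
    constructor
    · rintro ⟨l, rfl⟩; exact ⟨l, by rw [hgl, map_pow]⟩
    · rintro ⟨l, rfl⟩; exact ⟨l, by rw [hgl, map_pow]⟩
  have hAle : ∀ j, A j ≤ L₀ := by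
    intro j x hx
    obtain ⟨l, rfl⟩ := (hmemA j x).mp hx
    exact ⟨l ^ p ^ j, by rw [map_pow]⟩
  have hA1 : A 1 = L₀.map θ := by
    ext x
    rw [hmemA, Subfield.mem_map]
    constructor
    · rintro ⟨l, rfl⟩
      exact ⟨ψ l, ⟨l, rfl⟩, by rw [hθ, frobenius_def, pow_one]⟩
    · rintro ⟨y, ⟨l, rfl⟩, rfl⟩
      exact ⟨l, by rw [hθ, frobenius_def, pow_one]⟩
  -- the key bound [L₀ : L₀^p] ≤ c, transferred from aux_rank_frob_le
  have hcm : (L₀.map θ).comap ψ = (frobenius L p).fieldRange := by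
    ext x
    simp only [Subfield.mem_comap, Subfield.mem_map, RingHom.mem_fieldRange, hL₀, hθ,
      frobenius_def]
    constructor
    · rintro ⟨y, ⟨l, rfl⟩, hl⟩
      exact ⟨l, ψ.injective (by rw [← hl, map_pow])⟩
    · rintro ⟨l, rfl⟩
      exact ⟨ψ l, ⟨l, rfl⟩, by rw [map_pow]⟩
  have hA1c : (L₀.map θ).relrank L₀ ≤ (c : Cardinal) := by
    have h1 := Subfield.lift_rank_comap (L₀.map θ) ψ
    rw [hcm] at h1
    have h2 : lift ((L₀.map θ).relrank L₀) ≤ (c : Cardinal) := by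
      rw [← h1]
      exact (lift_le.mpr (aux_rank_frob_le p K L c hc)).trans_eq (lift_natCast _)
    exact lift_le_nat_iff.mp h2
  have claim : ∀ j, (A j).relrank L₀ ≤ ((c ^ j : ℕ) : Cardinal) := by
    intro j
    induction j with
    | zero =>
      have : A 0 = L₀ := by
        ext x
        rw [hmemA]
        exact ⟨fun ⟨l, hl⟩ => ⟨l, by simpa using hl⟩, fun ⟨l, hl⟩ => ⟨l, by simpa using hl⟩⟩
      rw [this, Subfield.relrank_self]
      simp
    | succ j ih =>
      have h1 : A (j + 1) = (A j).map θ := by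
        ext x
        rw [hmemA, Subfield.mem_map]
        constructor
        · rintro ⟨l, rfl⟩
          refine ⟨ψ l ^ p ^ j, (hmemA j _).mpr ⟨l, rfl⟩, ?_⟩
          rw [hθ, frobenius_def, ← pow_mul, ← pow_succ]
        · rintro ⟨y, hy, rfl⟩
          obtain ⟨l, rfl⟩ := (hmemA j y).mp hy
          exact ⟨l, by rw [hθ, frobenius_def, ← pow_mul, ← pow_succ]⟩
      have hle1 : A (j + 1) ≤ A 1 := by
        rw [h1, hA1]
        intro x hx
        obtain ⟨y, hy, rfl⟩ := Subfield.mem_map.mp hx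
        exact Subfield.mem_map.mpr ⟨y, hAle j hy, rfl⟩
      have hA1le : A 1 ≤ L₀ := hAle 1
      have hchain := Subfield.relrank_mul_relrank hle1 hA1le
      have hmm : (A (j + 1)).relrank (A 1) = (A j).relrank L₀ := by
        rw [h1, hA1]
        exact Subfield.relrank_map_map _ _ θ
      calc (A (j + 1)).relrank L₀ = (A (j + 1)).relrank (A 1) * (A 1).relrank L₀ :=
            hchain.symm
        _ ≤ ((c ^ j : ℕ) : Cardinal) * (c : Cardinal) := by
            rw [hA1] at hmm ⊢
            exact mul_le_mul' (hmm ▸ ih) hA1c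
        _ = ((c ^ (j + 1) : ℕ) : Cardinal) := by push_cast; ring
  -- assemble
  set ψE : L ≃+* ↥L₀ := RingEquiv.ofBijective ψ.rangeRestrictField
    ⟨fun a b hab => ψ.injective (congrArg Subtype.val hab), by
      rintro ⟨y, hy⟩
      obtain ⟨z, rfl⟩ := RingHom.mem_fieldRange.mp hy
      exact ⟨z, Subtype.ext rfl⟩⟩ with hψE
  have hL0top : L₀.relrank ⊤ = Module.rank L M := by
    rw [Subfield.relrank_top_right]
    exact (Algebra.rank_eq_of_equiv_equiv ψE (RingEquiv.refl M) (by ext l; rfl)).symm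
  have hgle : g.fieldRange ≤ L₀ := hgr ▸ hAle k
  have hrank : Module.rank ↥g.fieldRange M = g.fieldRange.relrank L₀ * L₀.relrank ⊤ := by
    rw [← Subfield.relrank_top_right, Subfield.relrank_mul_relrank hgle le_top]
  have hMbound : Module.rank ↥g.fieldRange M ≤ ((d * c ^ k : ℕ) : Cardinal) := by
    rw [hrank]
    calc g.fieldRange.relrank L₀ * L₀.relrank ⊤
        ≤ ((c ^ k : ℕ) : Cardinal) * (d : ℕ) := by
          refine mul_le_mul' ?_ (hL0top ▸ hd)
          rw [hgr]; exact claim k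
      _ = ((d * c ^ k : ℕ) : Cardinal) := by push_cast; ring
  have final := step2.trans (lift_le.mpr hMbound)
  rw [lift_natCast] at final
  exact lift_le_nat_iff.mp final
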